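/- Let a and N be positive integers and let z₀ ∈ [0, π]. Let κ_N(x,z) denote the Taylor polynomial of degree N−1, in the variable z and centered at z₀, of the function z ↦ sin((a+1)(x−z)), and define ũ(z) := ∫₀^π κ_N(x,z) · sin(ax) dx. Then for every z ∈ [0, π], |(2a/(2a+1)) · sin((a+1)z) − ũ(z)| ≤ π^{N+1} (a+1)^N / N!. -/

import Mathlib

open Real intervalIntegral

lemma iterDeriv_sin_affine (p q : ℝ) (l : ℕ) :
    iteratedDeriv l (fun w : ℝ => Real.sin (p * w + q)) =
      fun w => p ^ l * Real.sin (p * w + q + l * (Real.pi / 2)) := by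
  induction l with
  | zero => simp
  | succ n ih =>
    rw [iteratedDeriv_succ, ih]
    funext w
    have h : HasDerivAt (fun w : ℝ => p ^ n * Real.sin (p * w + q + n * (Real.pi / 2)))
        (p ^ n * (Real.cos (p * w + q + n * (Real.pi / 2)) * (p * 1))) w := by
      exact ((((hasDerivAt_id w).const_mul p).add_const q).add_const
        ((n : ℝ) * (Real.pi / 2))).sin.const_mul (p ^ n)
    rw [h.deriv]
    have hc : ((n : ℝ) + 1) * (Real.pi / 2) = (n : ℝ) * (Real.pi / 2) + Real.pi / 2 := by ring
    push_cast
    rw [hc, ← add_assoc, Real.sin_add_pi_div_two]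
    ring

lemma iterDerivWithin_eq (f : ℝ → ℝ) (hf : ContDiff ℝ ⊤ f) {s : Set ℝ}
    (hs : UniqueDiffOn ℝ s) (k : ℕ) :
    ∀ y ∈ s, iteratedDerivWithin k f s y = iteratedDeriv k f y := by
  induction k with
  | zero => intro y hy; simp
  | succ n ih =>
    intro y hy
    rw [iteratedDerivWithin_succ, iteratedDeriv_succ,
      derivWithin_congr ih (ih y hy)]
    exact ((hf.differentiable_iteratedDeriv n (by simp)).differentiableAt).derivWithin (hs y hy)

lemma taylor_abs_bound_lt {f : ℝ → ℝ} (hf : ContDiff ℝ ⊤ f) {C : ℝ} {n : ℕ}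
    (hC : ∀ y, |iteratedDeriv (n + 1) f y| ≤ C) {z₀ z : ℝ} (h : z₀ < z) :
    |f z - ∑ l ∈ Finset.range (n + 1),
        (z - z₀) ^ l / (Nat.factorial l : ℝ) * iteratedDeriv l f z₀|
      ≤ C * |z - z₀| ^ (n + 1) / (Nat.factorial (n + 1) : ℝ) := by
  have hu : UniqueDiffOn ℝ (Set.Icc z₀ z) := uniqueDiffOn_Icc h
  have hcd : ContDiffOn ℝ n f (Set.Icc z₀ z) := (hf.of_le le_top).contDiffOn
  have hdg : Differentiable ℝ (iteratedDeriv n f) :=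
    hf.differentiable_iteratedDeriv n (by simp)
  have hdiff : DifferentiableOn ℝ (iteratedDerivWithin n f (Set.Icc z₀ z)) (Set.Ioo z₀ z) :=
    (hdg.differentiableOn).congr fun y hy =>
      iterDerivWithin_eq f hf hu n y (Set.Ioo_subset_Icc_self hy)
  obtain ⟨x', hx', hrem⟩ := taylor_mean_remainder_lagrange h.ne
    (by rwa [Set.uIcc_of_le h.le]) (by rwa [Set.uIcc_of_le h.le, Set.uIoo_of_le h.le])
  rw [Set.uIcc_of_le h.le] at hrem
  rw [Set.uIoo_of_le h.le] at hx'
  have htay : taylorWithinEval f n (Set.Icc z₀ z) z₀ z =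
      ∑ l ∈ Finset.range (n + 1),
        (z - z₀) ^ l / (Nat.factorial l : ℝ) * iteratedDeriv l f z₀ := by
    rw [taylor_within_apply]
    refine Finset.sum_congr rfl fun l _ => ?_
    rw [iterDerivWithin_eq f hf hu l z₀ (Set.left_mem_Icc.2 h.le)]
    rw [smul_eq_mul]; ring
  rw [← htay, hrem,
    iterDerivWithin_eq f hf hu (n + 1) x' (Set.Ioo_subset_Icc_self hx')]
  rw [abs_div, abs_mul, abs_pow, Nat.abs_cast]
  apply div_le_div_of_nonneg_right ?_ (by positivity)
  · exact mul_le_mul (hC x') le_rfl (by positivity) ((abs_nonneg _).trans (hC x'))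

lemma taylor_abs_bound {f : ℝ → ℝ} (hf : ContDiff ℝ ⊤ f) {C : ℝ} {N : ℕ} (hN : 1 ≤ N)
    (hC : ∀ y, |iteratedDeriv N f y| ≤ C) (z₀ z : ℝ) :
    |f z - ∑ l ∈ Finset.range N,
        (z - z₀) ^ l / (Nat.factorial l : ℝ) * iteratedDeriv l f z₀|
      ≤ C * |z - z₀| ^ N / (Nat.factorial N : ℝ) := by
  obtain ⟨n, rfl⟩ : ∃ n, N = n + 1 := ⟨N - 1, (Nat.succ_pred_eq_of_pos hN).symm⟩
  rcases lt_trichotomy z₀ z with h | h | h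
  · exact taylor_abs_bound_lt hf hC h
  · subst h
    have hsum : ∑ l ∈ Finset.range (n + 1),
        (z₀ - z₀) ^ l / (Nat.factorial l : ℝ) * iteratedDeriv l f z₀ = f z₀ := by
      rw [Finset.sum_eq_single_of_mem 0 (Finset.mem_range.2 (Nat.succ_pos n))]
      · simp
      · intro l _ hl
        simp [zero_pow hl]
    rw [hsum, sub_self, abs_zero, sub_self, abs_zero, zero_pow (Nat.succ_ne_zero n),
      mul_zero, zero_div]
  · -- reflect
    set g : ℝ → ℝ := fun w => f (-w) with hg
    have hgc : ContDiff ℝ ⊤ g := hf.comp contDiff_neg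
    have hgC : ∀ y, |iteratedDeriv (n + 1) g y| ≤ C := by
      intro y
      rw [hg, iteratedDeriv_comp_neg]
      rw [smul_eq_mul, abs_mul, abs_pow, abs_neg, abs_one, one_pow, one_mul]
      exact hC (-y)
    have hb := taylor_abs_bound_lt hgc hgC (neg_lt_neg h)
    have hsum : ∑ l ∈ Finset.range (n + 1),
        (-z - -z₀) ^ l / (Nat.factorial l : ℝ) * iteratedDeriv l g (-z₀) =
        ∑ l ∈ Finset.range (n + 1),
        (z - z₀) ^ l / (Nat.factorial l : ℝ) * iteratedDeriv l f z₀ := by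
      refine Finset.sum_congr rfl fun l _ => ?_
      rw [hg, iteratedDeriv_comp_neg, neg_neg, smul_eq_mul]
      have : (-z - -z₀) ^ l * (-1 : ℝ) ^ l = (z - z₀) ^ l := by
        rw [← mul_pow]; ring_nf
      field_simp
      linear_combination (iteratedDeriv l f z₀) * this
    have hz : g (-z) = f z := by simp [hg]
    have habs : |-z - -z₀| = |z - z₀| := by
      rw [abs_sub_comm]; congr 1; ring
    rw [hz, hsum, habs] at hb
    exact hb

theorem frequency_bootstrapping (a N : ℕ) (ha : 1 ≤ a) (hN : 1 ≤ N)
    (z₀ : ℝ) (hz₀ : z₀ ∈ Set.Icc 0 Real.pi) :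
    ∀ z ∈ Set.Icc (0:ℝ) Real.pi,
      |(2 * (a : ℝ) / (2 * (a : ℝ) + 1)) * Real.sin (((a : ℝ) + 1) * z) -
          ∫ x in (0:ℝ)..Real.pi,
            (∑ l ∈ Finset.range N,
              (z - z₀) ^ l / (Nat.factorial l : ℝ) *
                iteratedDeriv l (fun w => Real.sin (((a : ℝ) + 1) * (x - w))) z₀) *
              Real.sin ((a : ℝ) * x)|
        ≤ Real.pi ^ (N + 1) * ((a : ℝ) + 1) ^ N / (Nat.factorial N : ℝ) := by
  intro z hz
  set c : ℝ := (a : ℝ) + 1 with hc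
  set b : ℝ := c * z with hb
  set m : ℝ := 2 * (a : ℝ) + 1 with hm
  have hm0 : m ≠ 0 := by positivity
  -- the exact integral
  set F : ℝ → ℝ := fun x => (Real.sin (x - b) - Real.sin (m * x - b) / m) / 2 with hF
  have hder : ∀ x ∈ Set.uIcc (0:ℝ) Real.pi,
      HasDerivAt F (Real.sin (c * (x - z)) * Real.sin ((a : ℝ) * x)) x := by
    intro x _
    have h1 : HasDerivAt F
        ((Real.cos (x - b) * 1 - Real.cos (m * x - b) * (m * 1) / m) / 2) x := by
      exact (((hasDerivAt_id x).sub_const b).sin.sub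
        ((((hasDerivAt_id x).const_mul m).sub_const b).sin.div_const m)).div_const 2
    convert h1 using 1
    have key : Real.cos (x - b) - Real.cos (m * x - b) =
        2 * (Real.sin (c * (x - z)) * Real.sin ((a : ℝ) * x)) := by
      rw [Real.cos_sub_cos]
      have e1 : ((x - b) + (m * x - b)) / 2 = c * (x - z) := by
        rw [hb, hm, hc]; ring
      have e2 : ((x - b) - (m * x - b)) / 2 = -((a : ℝ) * x) := by
        rw [hm]; ring
      rw [e1, e2, Real.sin_neg]; ring
    field_simp
    ring_nf at key ⊢
    linarith [key]
  have hcont : Continuous fun x => Real.sin (c * (x - z)) * Real.sin ((a : ℝ) * x) := by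
    fun_prop
  have hint : ∫ x in (0:ℝ)..Real.pi, Real.sin (c * (x - z)) * Real.sin ((a : ℝ) * x) =
      F Real.pi - F 0 := by
    exact integral_eq_sub_of_hasDerivAt hder (hcont.intervalIntegrable _ _)
  have hFval : F Real.pi - F 0 = 2 * (a : ℝ) / (2 * (a : ℝ) + 1) * Real.sin (c * z) := by
    have h2 : Real.sin (m * Real.pi - b) = Real.sin b := by
      have : m * Real.pi - b = (Real.pi - b) + (a : ℝ) * (2 * Real.pi) := by
        rw [hm]; ring
      rw [this]
      rw [show ((a:ℝ) * (2 * Real.pi)) = ((a:ℕ) : ℝ) * (2 * Real.pi) by norm_num]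
      rw [Real.sin_add_nat_mul_two_pi, Real.sin_pi_sub]
    have h3 : Real.sin (Real.pi - b) = Real.sin b := Real.sin_pi_sub b
    have h4 : Real.sin (m * 0 - b) = -Real.sin b := by
      rw [mul_zero, zero_sub, Real.sin_neg]
    have h5 : Real.sin ((0:ℝ) - b) = -Real.sin b := by rw [zero_sub, Real.sin_neg]
    rw [hF]
    simp only [h2, h3, h4, h5]
    rw [hb, hm]
    field_simp
    ring
  -- rewrite target using the exact integral
  rw [show (2 * (a : ℝ) / (2 * (a : ℝ) + 1)) * Real.sin (((a : ℝ) + 1) * z) =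
      ∫ x in (0:ℝ)..Real.pi, Real.sin (c * (x - z)) * Real.sin ((a : ℝ) * x) by
    rw [hint, hFval, hc]]
  -- representation of the iterated derivatives
  have hrep : ∀ x : ℝ, ∀ l : ℕ,
      iteratedDeriv l (fun w => Real.sin (c * (x - w))) z₀ =
        (-c) ^ l * Real.sin ((-c) * z₀ + c * x + l * (Real.pi / 2)) := by
    intro x l
    have : (fun w => Real.sin (c * (x - w))) = fun w => Real.sin ((-c) * w + c * x) := by
      funext w; ring_nf
    rw [this, iterDeriv_sin_affine]
  -- integrability of the polynomial part
  have hPc : Continuous fun x =>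
      (∑ l ∈ Finset.range N, (z - z₀) ^ l / (Nat.factorial l : ℝ) *
        iteratedDeriv l (fun w => Real.sin (c * (x - w))) z₀) * Real.sin ((a : ℝ) * x) := by
    have : (fun x =>
        (∑ l ∈ Finset.range N, (z - z₀) ^ l / (Nat.factorial l : ℝ) *
          iteratedDeriv l (fun w => Real.sin (c * (x - w))) z₀) * Real.sin ((a : ℝ) * x)) =
        fun x => (∑ l ∈ Finset.range N, (z - z₀) ^ l / (Nat.factorial l : ℝ) *
          ((-c) ^ l * Real.sin ((-c) * z₀ + c * x + l * (Real.pi / 2)))) *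
          Real.sin ((a : ℝ) * x) := by
      funext x
      congr 1
      exact Finset.sum_congr rfl fun l _ => by rw [hrep x l]
    rw [this]
    apply Continuous.mul ?_ (by fun_prop)
    exact continuous_finset_sum _ fun l _ => by fun_prop
  rw [← intervalIntegral.integral_sub (hcont.intervalIntegrable _ _)
    (hPc.intervalIntegrable _ _)]
  -- bound the integrand
  have hbound : ∀ x ∈ Set.uIoc (0:ℝ) Real.pi,
      ‖Real.sin (c * (x - z)) * Real.sin ((a : ℝ) * x) -
        (∑ l ∈ Finset.range N, (z - z₀) ^ l / (Nat.factorial l : ℝ) *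
          iteratedDeriv l (fun w => Real.sin (c * (x - w))) z₀) * Real.sin ((a : ℝ) * x)‖
        ≤ Real.pi ^ N * c ^ N / (Nat.factorial N : ℝ) := by
    intro x _
    rw [Real.norm_eq_abs, ← sub_mul, abs_mul]
    have hfc : ContDiff ℝ ⊤ (fun w => Real.sin (c * (x - w))) :=
      Real.contDiff_sin.comp (contDiff_const.mul (contDiff_const.sub contDiff_id))
    have hCd : ∀ y, |iteratedDeriv N (fun w => Real.sin (c * (x - w))) y| ≤ c ^ N := by
      intro y
      have : (fun w => Real.sin (c * (x - w))) = fun w => Real.sin ((-c) * w + c * x) := by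
        funext w; ring_nf
      rw [this, iterDeriv_sin_affine]
      rw [abs_mul, abs_pow, abs_neg]
      have hcpos : (0:ℝ) < c := by rw [hc]; positivity
      calc |c| ^ N * |Real.sin ((-c) * y + c * x + N * (Real.pi / 2))|
          ≤ |c| ^ N * 1 := by
            exact mul_le_mul_of_nonneg_left (Real.abs_sin_le_one _) (by positivity)
        _ = c ^ N := by rw [mul_one, abs_of_pos hcpos]
    have htb := taylor_abs_bound hfc hN hCd z₀ z
    have hzz : |z - z₀| ≤ Real.pi := by
      rw [abs_sub_le_iff]
      constructor <;> [linarith [hz.1, hz.2, hz₀.1, hz₀.2]; linarith [hz.1, hz.2, hz₀.1, hz₀.2]]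
    calc |Real.sin (c * (x - z)) -
          ∑ l ∈ Finset.range N, (z - z₀) ^ l / (Nat.factorial l : ℝ) *
            iteratedDeriv l (fun w => Real.sin (c * (x - w))) z₀| * |Real.sin ((a:ℝ) * x)|
        ≤ (c ^ N * |z - z₀| ^ N / (Nat.factorial N : ℝ)) * 1 := by
          exact mul_le_mul htb (Real.abs_sin_le_one _) (abs_nonneg _) (by positivity)
      _ ≤ Real.pi ^ N * c ^ N / (Nat.factorial N : ℝ) := by
          rw [mul_one]
          have hcpos : (0:ℝ) < c := by rw [hc]; positivity
          have := pow_le_pow_left₀ (abs_nonneg (z - z₀)) hzz N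
          calc c ^ N * |z - z₀| ^ N / (Nat.factorial N : ℝ)
              ≤ c ^ N * Real.pi ^ N / (Nat.factorial N : ℝ) := by
                apply div_le_div_of_nonneg_right ?_ (by positivity)
                exact mul_le_mul_of_nonneg_left this (by positivity)
            _ = Real.pi ^ N * c ^ N / (Nat.factorial N : ℝ) := by ring
  calc ‖∫ x in (0:ℝ)..Real.pi,
        (Real.sin (c * (x - z)) * Real.sin ((a : ℝ) * x) -
          (∑ l ∈ Finset.range N, (z - z₀) ^ l / (Nat.factorial l : ℝ) *
            iteratedDeriv l (fun w => Real.sin (c * (x - w))) z₀) * Real.sin ((a : ℝ) * x))‖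
      ≤ (Real.pi ^ N * c ^ N / (Nat.factorial N : ℝ)) * |Real.pi - 0| :=
        intervalIntegral.norm_integral_le_of_norm_le_const hbound
    _ = Real.pi ^ (N + 1) * c ^ N / (Nat.factorial N : ℝ) := by
        rw [sub_zero, abs_of_pos Real.pi_pos]; ring
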